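/- Let f be drawn uniformly at random from the reciprocal Littlewood polynomials of length n (coefficients in {1,-1} satisfying a_j = a_{n-1-j}). Then E(‖f‖₄⁴) = 3n² - 3n + (1-(-1)ⁿ)/2. -/

import Mathlib

open MeasureTheory

/-- The fourth power of the `L₄` norm of `f(z) = ∑_{j<n} a_j z^j` on the unit circle. -/
noncomputable def L4pow4 (n : ℕ) (a : ℕ → ℝ) : ℝ :=
  (1 / (2 * Real.pi)) * ∫ θ in (0:ℝ)..(2 * Real.pi),
    ‖∑ j ∈ Finset.range n, (a j : ℂ) * Complex.exp ((θ : ℂ) * Complex.I) ^ j‖ ^ 4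

/-- The coefficient sequence of the reciprocal Littlewood polynomial of length `n`
determined by the free coefficients `a_0, …, a_{⌊(n-1)/2⌋}` (given as Booleans
encoding ±1): the remaining coefficients are determined by `a_j = a_{n-1-j}`. -/
def symCoef (n : ℕ) (f : Fin ((n + 1) / 2) → Bool) : ℕ → ℝ := fun j =>
  if h : j < (n + 1) / 2 then (if f ⟨j, h⟩ then 1 else -1)
  else if h2 : j < n then (if f ⟨n - 1 - j, by omega⟩ then 1 else -1)
  else 0

/-! ### Analytic part: evaluating the `L⁴` norm as a correlation sum -/

noncomputable def lwE (x : ℝ) : ℂ := Complex.exp ((x:ℂ) * Complex.I)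

lemma lwE_mul (x y : ℝ) : lwE x * lwE y = lwE (x + y) := by
  rw [lwE, lwE, lwE, ← Complex.exp_add]; push_cast; ring_nf

lemma lwE_conj (x : ℝ) : (starRingEnd ℂ) (lwE x) = lwE (-x) := by
  rw [lwE, lwE, ← Complex.exp_conj]; congr 1; simp [Complex.conj_I]

lemma lwE_pow (x : ℝ) (j : ℕ) : (lwE x) ^ j = lwE (j * x) := by
  rw [lwE, lwE, ← Complex.exp_nat_mul]; push_cast; ring_nf

lemma lwE_re (x : ℝ) : (lwE x).re = Real.cos x := Complex.exp_ofReal_mul_I_re x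

lemma lw_habs (z : ℂ) : ‖z‖^4 = ((z * (starRingEnd ℂ) z)^2).re := by
  rw [Complex.mul_conj, ← Complex.ofReal_pow, Complex.ofReal_re, Complex.normSq_eq_norm_sq]
  ring

lemma lw_abs4 (n : ℕ) (a : ℕ → ℝ) (θ : ℝ) :
    ‖∑ j ∈ Finset.range n, (a j : ℂ) * Complex.exp ((θ : ℂ) * Complex.I) ^ j‖ ^ 4
    = ∑ j ∈ Finset.range n, ∑ l ∈ Finset.range n, ∑ k ∈ Finset.range n, ∑ m ∈ Finset.range n,
        (a j * a k * a l * a m) * Real.cos ((j * θ - k * θ) + (l * θ - m * θ)) := by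
  have hw : Complex.exp ((θ : ℂ) * Complex.I) = lwE θ := rfl
  rw [lw_habs]
  have hS : (∑ j ∈ Finset.range n, (a j : ℂ) * Complex.exp ((θ : ℂ) * Complex.I) ^ j)
      = ∑ j ∈ Finset.range n, (a j : ℂ) * lwE (j * θ) := by
    refine Finset.sum_congr rfl fun j _ => ?_
    rw [hw, lwE_pow]
  rw [hS]
  have hconj : (starRingEnd ℂ) (∑ j ∈ Finset.range n, (a j : ℂ) * lwE (j * θ))
      = ∑ k ∈ Finset.range n, (a k : ℂ) * lwE (-(k * θ)) := by
    rw [map_sum]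
    refine Finset.sum_congr rfl fun k _ => ?_
    rw [map_mul, lwE_conj, Complex.conj_ofReal]
  rw [hconj, Finset.sum_mul_sum]
  have hT : ∀ j k : ℕ, ((a j : ℂ) * lwE (j * θ)) * ((a k : ℂ) * lwE (-(k * θ)))
      = ((a j * a k : ℝ) : ℂ) * lwE (j * θ - k * θ) := by
    intro j k
    push_cast
    rw [mul_mul_mul_comm, lwE_mul]
    ring_nf
  simp only [hT]
  rw [sq, Finset.sum_mul_sum]
  rw [Complex.re_sum]
  refine Finset.sum_congr rfl fun j _ => ?_
  rw [Complex.re_sum]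
  refine Finset.sum_congr rfl fun l _ => ?_
  rw [Finset.sum_mul_sum, Complex.re_sum]
  refine Finset.sum_congr rfl fun k _ => ?_
  rw [Complex.re_sum]
  refine Finset.sum_congr rfl fun m _ => ?_
  rw [mul_mul_mul_comm, lwE_mul, ← Complex.ofReal_mul, Complex.re_ofReal_mul, lwE_re]
  ring

lemma lw_key_integral (d : ℤ) :
    ∫ θ in (0:ℝ)..(2 * Real.pi), Real.cos ((d : ℝ) * θ) =
      if d = 0 then 2 * Real.pi else 0 := by
  rcases eq_or_ne d 0 with h | h
  · simp [h]
  · have hd : (d : ℝ) ≠ 0 := Int.cast_ne_zero.mpr h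
    rw [if_neg h]
    rw [intervalIntegral.integral_comp_mul_left (a := (0:ℝ)) (b := 2*Real.pi)
      (fun x => Real.cos x) hd]
    simp [_root_.integral_cos]
    exact Or.inr (by rw [show (d:ℝ)*(2*Real.pi) = ((2*d:ℤ):ℝ)*Real.pi by push_cast; ring]
                     exact Real.sin_int_mul_pi _)

lemma lw_isum {n : ℕ} (f : ℕ → ℝ → ℝ) (hf : ∀ i, Continuous (f i)) :
    (∫ θ in (0:ℝ)..(2*Real.pi), ∑ i ∈ Finset.range n, f i θ)
      = ∑ i ∈ Finset.range n, ∫ θ in (0:ℝ)..(2*Real.pi), f i θ :=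
  intervalIntegral.integral_finset_sum fun i _ => (hf i).intervalIntegrable _ _

lemma lw_L4_eq (n : ℕ) (a : ℕ → ℝ) :
    L4pow4 n a = ∑ j ∈ Finset.range n, ∑ l ∈ Finset.range n, ∑ k ∈ Finset.range n,
      ∑ m ∈ Finset.range n, if j + l = k + m then a j * a k * a l * a m else 0 := by
  have hc : ∀ j k l m : ℕ, Continuous (fun θ : ℝ =>
      (a j * a k * a l * a m) * Real.cos ((j * θ - k * θ) + (l * θ - m * θ))) := by
    intro j k l m; fun_prop
  have hc1 : ∀ j k l : ℕ, Continuous (fun θ : ℝ => ∑ m ∈ Finset.range n,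
      (a j * a k * a l * a m) * Real.cos ((j * θ - k * θ) + (l * θ - m * θ))) :=
    fun j k l => continuous_finset_sum _ fun m _ => hc j k l m
  have hc2 : ∀ j l : ℕ, Continuous (fun θ : ℝ => ∑ k ∈ Finset.range n, ∑ m ∈ Finset.range n,
      (a j * a k * a l * a m) * Real.cos ((j * θ - k * θ) + (l * θ - m * θ))) :=
    fun j l => continuous_finset_sum _ fun k _ => hc1 j k l
  have hc3 : ∀ j : ℕ, Continuous (fun θ : ℝ =>
      ∑ l ∈ Finset.range n, ∑ k ∈ Finset.range n, ∑ m ∈ Finset.range n,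
      (a j * a k * a l * a m) * Real.cos ((j * θ - k * θ) + (l * θ - m * θ))) :=
    fun j => continuous_finset_sum _ fun l _ => hc2 j l
  unfold L4pow4
  simp only [lw_abs4 n a]
  rw [lw_isum _ hc3]
  simp only [Finset.mul_sum]
  refine Finset.sum_congr rfl fun j _ => ?_
  rw [lw_isum _ (hc2 j)]
  simp only [Finset.mul_sum]
  refine Finset.sum_congr rfl fun l _ => ?_
  rw [lw_isum _ (fun k => hc1 j k l)]
  simp only [Finset.mul_sum]
  refine Finset.sum_congr rfl fun k _ => ?_
  rw [lw_isum _ (hc j k l)]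
  simp only [Finset.mul_sum]
  refine Finset.sum_congr rfl fun m _ => ?_
  have harg : ∀ θ : ℝ, ((j:ℝ) * θ - k * θ) + ((l:ℝ) * θ - m * θ)
      = ((((j+l : ℕ) : ℤ) - ((k+m : ℕ) : ℤ) : ℤ) : ℝ) * θ := by
    intro θ; push_cast; ring
  simp only [harg]
  rw [intervalIntegral.integral_const_mul, lw_key_integral]
  by_cases h : j + l = k + m
  · rw [if_pos h, if_pos (by omega)]
    have hpi : Real.pi ≠ 0 := Real.pi_ne_zero
    field_simp
  · rw [if_neg h, if_neg (by omega), mul_zero, mul_zero]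

/-! ### Probabilistic part: expectations of sign products -/

def lwSgn (b : Bool) : ℝ := if b then 1 else -1
noncomputable def lwInd (P : Prop) [Decidable P] : ℝ := if P then 1 else 0

lemma lw_flip_sum {M : ℕ} (p : Fin M) (F : (Fin M → Bool) → ℝ)
    (hF : ∀ f, F (Function.update f p (!(f p))) = - F f) :
    ∑ f : Fin M → Bool, F f = 0 := by
  refine Finset.sum_ninvolution (fun f => Function.update f p (!(f p))) ?_ ?_ ?_ ?_
  · intro f; rw [hF]; ring
  · intro f hf h
    have := congrFun h p
    simp at this
  · intro f; exact Finset.mem_univ _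
  · intro f
    funext x
    by_cases hx : x = p
    · subst hx; simp
    · simp [Function.update_of_ne hx]

lemma lw_sum_one (M : ℕ) : ∑ _f : Fin M → Bool, (1:ℝ) = 2 ^ M := by
  rw [Finset.sum_const, Finset.card_univ]
  simp [Fintype.card_fun]

lemma lw_sum_two {M : ℕ} {r s : Fin M} (h : r ≠ s) :
    ∑ f : Fin M → Bool, lwSgn (f r) * lwSgn (f s) = 0 := by
  refine lw_flip_sum r _ fun f => ?_
  rw [Function.update_self, Function.update_of_ne (Ne.symm h)]
  cases f r <;> cases f s <;> simp [lwSgn]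

lemma lw_sum_four {M : ℕ} {p q r s : Fin M} (h1 : p ≠ q) (h2 : p ≠ r) (h3 : p ≠ s) :
    ∑ f : Fin M → Bool, lwSgn (f p) * lwSgn (f q) * lwSgn (f r) * lwSgn (f s) = 0 := by
  refine lw_flip_sum p _ fun f => ?_
  rw [Function.update_self, Function.update_of_ne (Ne.symm h1),
    Function.update_of_ne (Ne.symm h2), Function.update_of_ne (Ne.symm h3)]
  cases f p <;> cases f q <;> cases f r <;> cases f s <;> norm_num [lwSgn]

lemma lw_boolsum (M : ℕ) (p q r s : Fin M) :
    ∑ f : Fin M → Bool, lwSgn (f p) * lwSgn (f q) * lwSgn (f r) * lwSgn (f s)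
    = 2 ^ M * (lwInd (p = q) * lwInd (r = s) + lwInd (p = r) * lwInd (q = s)
        + lwInd (p = s) * lwInd (q = r)
        - 2 * (lwInd (p = q) * lwInd (q = r) * lwInd (r = s))) := by
  by_cases hpq : p = q
  · subst hpq
    have hL : ∑ f : Fin M → Bool, lwSgn (f p) * lwSgn (f p) * lwSgn (f r) * lwSgn (f s)
        = ∑ f : Fin M → Bool, lwSgn (f r) * lwSgn (f s) :=
      Finset.sum_congr rfl fun f _ => by cases f p <;> simp [lwSgn]
    rw [hL]
    by_cases hrs : r = s
    · subst hrs
      have hL2 : ∑ f : Fin M → Bool, lwSgn (f r) * lwSgn (f r) = ∑ _f : Fin M → Bool, (1:ℝ) :=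
        Finset.sum_congr rfl fun f _ => by cases f r <;> simp [lwSgn]
      rw [hL2, lw_sum_one]
      by_cases hpr : p = r <;> simp [lwInd, hpr] <;> norm_num
    · rw [lw_sum_two hrs]
      by_cases hpr : p = r
      · by_cases hps : p = s
        · exact absurd (hpr.symm.trans hps) hrs
        · simp [lwInd, hpr, hps, hrs]
      · simp [lwInd, hpr, hrs]
  · by_cases hpr : p = r
    · subst hpr
      have hL : ∑ f : Fin M → Bool, lwSgn (f p) * lwSgn (f q) * lwSgn (f p) * lwSgn (f s)
          = ∑ f : Fin M → Bool, lwSgn (f q) * lwSgn (f s) :=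
        Finset.sum_congr rfl fun f _ => by
          cases f p <;> cases f q <;> cases f s <;> norm_num [lwSgn]
      rw [hL]
      by_cases hqs : q = s
      · subst hqs
        have hL2 : ∑ f : Fin M → Bool, lwSgn (f q) * lwSgn (f q) = ∑ _f : Fin M → Bool, (1:ℝ) :=
          Finset.sum_congr rfl fun f _ => by cases f q <;> simp [lwSgn]
        rw [hL2, lw_sum_one]
        simp [lwInd, hpq, Ne.symm hpq]
      · rw [lw_sum_two hqs]
        simp [lwInd, hpq, hqs, Ne.symm hpq]
    · by_cases hps : p = s
      · subst hps
        have hL : ∑ f : Fin M → Bool, lwSgn (f p) * lwSgn (f q) * lwSgn (f r) * lwSgn (f p)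
            = ∑ f : Fin M → Bool, lwSgn (f q) * lwSgn (f r) :=
          Finset.sum_congr rfl fun f _ => by
            cases f p <;> cases f q <;> cases f r <;> norm_num [lwSgn]
        rw [hL]
        by_cases hqr : q = r
        · subst hqr
          have hL2 : ∑ f : Fin M → Bool, lwSgn (f q) * lwSgn (f q)
              = ∑ _f : Fin M → Bool, (1:ℝ) :=
            Finset.sum_congr rfl fun f _ => by cases f q <;> simp [lwSgn]
          rw [hL2, lw_sum_one]
          simp [lwInd, hpq, hpr]
        · rw [lw_sum_two hqr]
          simp [lwInd, hpq, hpr, hqr]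
      · rw [lw_sum_four hpq hpr hps]
        simp [lwInd, hpq, hpr, hps]

/-! ### Bridging: symmetric coefficients as signs indexed by folded positions -/

def lwG (n : ℕ) (hn : 0 < n) (j : ℕ) : Fin ((n + 1) / 2) :=
  if h : j < (n + 1) / 2 then ⟨j, h⟩ else ⟨n - 1 - j, by omega⟩

lemma lw_symCoef_eq (n : ℕ) (hn : 0 < n) (f : Fin ((n + 1) / 2) → Bool) (j : ℕ) (hj : j < n) :
    symCoef n f j = lwSgn (f (lwG n hn j)) := by
  unfold symCoef lwG lwSgn
  by_cases h : j < (n + 1) / 2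
  · simp [h]
  · simp [h, hj]

lemma lwG_eq_iff (n : ℕ) (hn : 0 < n) (j k : ℕ) (hj : j < n) (hk : k < n) :
    (lwG n hn j = lwG n hn k) ↔ (j = k ∨ j + k = n - 1) := by
  unfold lwG
  split_ifs <;> simp [Fin.ext_iff] <;> omega

lemma lwInd_congr {P Q : Prop} [Decidable P] [Decidable Q] (h : P ↔ Q) : lwInd P = lwInd Q := by
  unfold lwInd; exact if_congr h rfl rfl

lemma lw_exp_eq (n : ℕ) (hn : 0 < n) (j k l m : ℕ)
    (hj : j < n) (hk : k < n) (hl : l < n) (hm : m < n) :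
    (1 / 2 ^ ((n + 1) / 2) : ℝ) *
      ∑ f : Fin ((n + 1) / 2) → Bool,
        symCoef n f j * symCoef n f k * symCoef n f l * symCoef n f m
    = lwInd (j = k ∨ j + k = n - 1) * lwInd (l = m ∨ l + m = n - 1)
      + lwInd (j = l ∨ j + l = n - 1) * lwInd (k = m ∨ k + m = n - 1)
      + lwInd (j = m ∨ j + m = n - 1) * lwInd (k = l ∨ k + l = n - 1)
      - 2 * (lwInd (j = k ∨ j + k = n - 1) * lwInd (k = l ∨ k + l = n - 1)
          * lwInd (l = m ∨ l + m = n - 1)) := by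
  simp only [lw_symCoef_eq n hn _ _ hj, lw_symCoef_eq n hn _ _ hk,
    lw_symCoef_eq n hn _ _ hl, lw_symCoef_eq n hn _ _ hm]
  rw [lw_boolsum]
  rw [lwInd_congr (lwG_eq_iff n hn j k hj hk), lwInd_congr (lwG_eq_iff n hn l m hl hm),
    lwInd_congr (lwG_eq_iff n hn j l hj hl), lwInd_congr (lwG_eq_iff n hn k m hk hm),
    lwInd_congr (lwG_eq_iff n hn j m hj hm), lwInd_congr (lwG_eq_iff n hn k l hk hl)]
  have h2 : (2:ℝ) ^ ((n+1)/2) ≠ 0 := by positivity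
  field_simp

/-! ### Combinatorial part: collapsing the correlation sums -/

lemma lw_ite_cong {P Q : Prop} [Decidable P] [Decidable Q] (h : P ↔ Q) (x : ℝ) :
    (if P then x else 0) = (if Q then x else 0) := if_congr h rfl rfl

lemma lw_and_shift {A B C : Prop} (Q : Prop) (h : A ↔ B ∧ C) :
    (A ∧ Q) ↔ (B ∧ (C ∧ Q)) := by tauto

lemma lwSumCollapse {n : ℕ} (e : ℕ) (he : e < n) (Q : Prop) [Decidable Q] (x : ℝ) :
    ∑ v ∈ Finset.range n, (if v = e ∧ Q then x else 0) = if Q then x else 0 := by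
  simp only [ite_and]
  rw [Finset.sum_ite_eq' (Finset.range n) e (fun _ => if Q then x else 0)]
  simp [he]

lemma lwSumCollapse₀ {n : ℕ} (e : ℕ) (he : e < n) (x : ℝ) :
    ∑ v ∈ Finset.range n, (if v = e then x else 0) = x := by
  rw [Finset.sum_ite_eq' (Finset.range n) e (fun _ => x)]
  simp [he]

lemma lwSumMid {n : ℕ} (Q : Prop) [Decidable Q] (x : ℝ) :
    ∑ v ∈ Finset.range n, (if 2*v+1 = n ∧ Q then x else 0)
      = if n % 2 = 1 ∧ Q then x else 0 := by
  rcases Nat.eq_zero_or_pos n with h | h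
  · subst h; simp
  · rw [Finset.sum_congr rfl (fun v hv => lw_ite_cong
      (lw_and_shift Q (by omega : (2*v+1 = n) ↔ (v = (n-1)/2 ∧ n % 2 = 1))) x)]
    exact lwSumCollapse _ (by omega) _ x

lemma lwSumMid₀ {n : ℕ} (x : ℝ) :
    ∑ v ∈ Finset.range n, (if 2*v+1 = n then x else 0)
      = if n % 2 = 1 then x else 0 := by
  rw [Finset.sum_congr rfl
      (fun v hv => lw_ite_cong (by tauto : (2*v+1 = n) ↔ (2*v+1 = n ∧ True)) x),
    lwSumMid]
  exact lw_ite_cong (by tauto) x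

lemma lwSumNotmid {n : ℕ} (Q : Prop) [Decidable Q] (x : ℝ) :
    ∑ v ∈ Finset.range n, (if 2*v+1 ≠ n ∧ Q then x else 0)
      = if Q then ((n:ℝ) - (if n % 2 = 1 then 1 else 0)) * x else 0 := by
  by_cases hQ : Q
  · simp only [hQ, and_true, if_true]
    have hpt : ∀ v : ℕ, (if 2*v+1 ≠ n then x else 0) = x - (if 2*v+1 = n then x else 0) := by
      intro v; split_ifs <;> simp_all
    simp only [hpt]
    rw [Finset.sum_sub_distrib, lwSumMid₀, Finset.sum_const, Finset.card_range, nsmul_eq_mul]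
    split_ifs <;> ring
  · simp [hQ]

lemma lwSumNotmid₀ {n : ℕ} (x : ℝ) :
    ∑ v ∈ Finset.range n, (if 2*v+1 ≠ n then x else 0)
      = ((n:ℝ) - (if n % 2 = 1 then 1 else 0)) * x := by
  rw [Finset.sum_congr rfl
      (fun v hv => lw_ite_cong (by tauto : (2*v+1 ≠ n) ↔ (2*v+1 ≠ n ∧ True)) x),
    lwSumNotmid]
  simp

section GroupIdentities

variable {n j k l m : ℕ}

lemma lw_g1 (hn : 0 < n) (hj : j < n) (hk : k < n) (hl : l < n) (hm : m < n) :
    (if j + l = k + m then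
        lwInd (j = k ∨ j + k = n - 1) * lwInd (l = m ∨ l + m = n - 1) else 0)
    = (if m = l ∧ k = j then (1:ℝ) else 0)
      + (if m = n-1-k ∧ (k = l ∧ (j = n-1-l ∧ 2*l+1 ≠ n)) then (1:ℝ) else 0) := by
  simp only [lwInd]
  split_ifs <;> norm_num <;> omega

set_option maxHeartbeats 2000000 in
lemma lw_g2 (hn : 0 < n) (hj : j < n) (hk : k < n) (hl : l < n) (hm : m < n) :
    (if j + l = k + m then
        lwInd (j = l ∨ j + l = n - 1) * lwInd (k = m ∨ k + m = n - 1) else 0)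
    = (if m = j ∧ (k = j ∧ l = j) then (1:ℝ) else 0)
      + (if m = n-1-k ∧ (2*k+1 ≠ n ∧ (l = j ∧ 2*j+1 = n)) then (1:ℝ) else 0)
      + (if m = k ∧ (2*k+1 = n ∧ (l = n-1-j ∧ 2*j+1 ≠ n)) then (1:ℝ) else 0)
      + (if m = n-1-k ∧ (2*k+1 ≠ n ∧ (l = n-1-j ∧ 2*j+1 ≠ n)) then (1:ℝ) else 0) := by
  simp only [lwInd]
  by_cases hC : j + l = k + m
  · rw [if_pos hC]
    split_ifs <;> norm_num <;> omega
  · rw [if_neg hC, if_neg (by omega), if_neg (by omega), if_neg (by omega), if_neg (by omega)]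
    norm_num

lemma lw_g3 (hn : 0 < n) (hj : j < n) (hk : k < n) (hl : l < n) (hm : m < n) :
    (if j + l = k + m then
        lwInd (j = m ∨ j + m = n - 1) * lwInd (k = l ∨ k + l = n - 1) else 0)
    = (if m = j ∧ k = l then (1:ℝ) else 0)
      + (if m = n-1-j ∧ (k = j ∧ (l = n-1-j ∧ 2*j+1 ≠ n)) then (1:ℝ) else 0) := by
  simp only [lwInd]
  split_ifs <;> norm_num <;> omega

set_option maxHeartbeats 2000000 in
lemma lw_g4 (hn : 0 < n) (hj : j < n) (hk : k < n) (hl : l < n) (hm : m < n) :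
    (if j + l = k + m then
        lwInd (j = k ∨ j + k = n - 1) * lwInd (k = l ∨ k + l = n - 1)
          * lwInd (l = m ∨ l + m = n - 1)
      else 0)
    = (if m = j ∧ (k = j ∧ l = j) then (1:ℝ) else 0)
      + (if m = n-1-k ∧ (k = j ∧ (l = n-1-j ∧ 2*j+1 ≠ n)) then (1:ℝ) else 0)
      + (if m = n-1-k ∧ (k = l ∧ (j = n-1-l ∧ 2*l+1 ≠ n)) then (1:ℝ) else 0) := by
  simp only [lwInd]
  by_cases hC : j + l = k + m
  · rw [if_pos hC]
    split_ifs <;> norm_num <;> omega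
  · rw [if_neg hC, if_neg (by omega), if_neg (by omega), if_neg (by omega)]
    norm_num

lemma lw_g_all (hn : 0 < n) (hj : j < n) (hk : k < n) (hl : l < n) (hm : m < n) :
    (if j + l = k + m then
      lwInd (j = k ∨ j + k = n - 1) * lwInd (l = m ∨ l + m = n - 1)
      + lwInd (j = l ∨ j + l = n - 1) * lwInd (k = m ∨ k + m = n - 1)
      + lwInd (j = m ∨ j + m = n - 1) * lwInd (k = l ∨ k + l = n - 1)
      - 2 * (lwInd (j = k ∨ j + k = n - 1) * lwInd (k = l ∨ k + l = n - 1)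
          * lwInd (l = m ∨ l + m = n - 1)) else 0)
    = ((if m = l ∧ k = j then (1:ℝ) else 0)
        + (if m = n-1-k ∧ (k = l ∧ (j = n-1-l ∧ 2*l+1 ≠ n)) then (1:ℝ) else 0))
      + ((if m = j ∧ (k = j ∧ l = j) then (1:ℝ) else 0)
        + (if m = n-1-k ∧ (2*k+1 ≠ n ∧ (l = j ∧ 2*j+1 = n)) then (1:ℝ) else 0)
        + (if m = k ∧ (2*k+1 = n ∧ (l = n-1-j ∧ 2*j+1 ≠ n)) then (1:ℝ) else 0)
        + (if m = n-1-k ∧ (2*k+1 ≠ n ∧ (l = n-1-j ∧ 2*j+1 ≠ n)) then (1:ℝ) else 0))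
      + ((if m = j ∧ k = l then (1:ℝ) else 0)
        + (if m = n-1-j ∧ (k = j ∧ (l = n-1-j ∧ 2*j+1 ≠ n)) then (1:ℝ) else 0))
      - 2 * ((if m = j ∧ (k = j ∧ l = j) then (1:ℝ) else 0)
        + (if m = n-1-k ∧ (k = j ∧ (l = n-1-j ∧ 2*j+1 ≠ n)) then (1:ℝ) else 0)
        + (if m = n-1-k ∧ (k = l ∧ (j = n-1-l ∧ 2*l+1 ≠ n)) then (1:ℝ) else 0)) := by
  have expand : ∀ (C : Prop) (_ : Decidable C) (t1 t2 t3 t4 : ℝ),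
      (if C then t1 + t2 + t3 - 2*t4 else 0)
      = (if C then t1 else 0) + (if C then t2 else 0) + (if C then t3 else 0)
        - 2*(if C then t4 else 0) := by
    intro C hC t1 t2 t3 t4; split_ifs <;> ring
  rw [expand, lw_g1 hn hj hk hl hm, lw_g2 hn hj hk hl hm, lw_g3 hn hj hk hl hm,
    lw_g4 hn hj hk hl hm]

end GroupIdentities

section EvalLemmas

variable {n : ℕ}
open Finset

lemma lw_evalA1 (hn : 0 < n) :
    ∑ j ∈ range n, ∑ l ∈ range n, ∑ k ∈ range n, ∑ m ∈ range n,
      (if m = l ∧ k = j then (1:ℝ) else 0) = (n:ℝ) * n := by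
  have s2 : ∀ j, j < n → ∀ l, l < n →
      (∑ k ∈ range n, ∑ m ∈ range n, (if m = l ∧ k = j then (1:ℝ) else 0)) = 1 := by
    intro j hj l hl
    rw [Finset.sum_congr rfl fun k _ => lwSumCollapse l hl (k = j) 1]
    exact lwSumCollapse₀ j hj 1
  rw [Finset.sum_congr rfl fun j hj => Finset.sum_congr rfl fun l hl =>
    s2 j (mem_range.mp hj) l (mem_range.mp hl)]
  simp [Finset.sum_const, Finset.card_range]

lemma lw_evalA2 (hn : 0 < n) :
    ∑ j ∈ range n, ∑ l ∈ range n, ∑ k ∈ range n, ∑ m ∈ range n,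
      (if m = n-1-k ∧ (k = l ∧ (j = n-1-l ∧ 2*l+1 ≠ n)) then (1:ℝ) else 0)
    = (n:ℝ) - (if n % 2 = 1 then 1 else 0) := by
  have s2 : ∀ j l, l < n →
      (∑ k ∈ range n, ∑ m ∈ range n,
        (if m = n-1-k ∧ (k = l ∧ (j = n-1-l ∧ 2*l+1 ≠ n)) then (1:ℝ) else 0))
      = if j = n-1-l ∧ 2*l+1 ≠ n then 1 else 0 := by
    intro j l hl
    rw [Finset.sum_congr rfl fun k _ => lwSumCollapse (n-1-k) (by omega) _ 1]
    exact lwSumCollapse l hl _ 1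
  have s3 : ∀ j, j < n →
      (∑ l ∈ range n, ∑ k ∈ range n, ∑ m ∈ range n,
        (if m = n-1-k ∧ (k = l ∧ (j = n-1-l ∧ 2*l+1 ≠ n)) then (1:ℝ) else 0))
      = if 2*j+1 ≠ n then 1 else 0 := by
    intro j hj
    rw [Finset.sum_congr rfl fun l hl => s2 j l (mem_range.mp hl)]
    rw [Finset.sum_congr rfl fun l hl =>
      lw_ite_cong (by have := mem_range.mp hl; omega :
        (j = n-1-l ∧ 2*l+1 ≠ n) ↔ (l = n-1-j ∧ 2*j+1 ≠ n)) 1]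
    exact lwSumCollapse (n-1-j) (by omega) _ 1
  rw [Finset.sum_congr rfl fun j hj => s3 j (mem_range.mp hj)]
  rw [lwSumNotmid₀]; ring

lemma lw_evalB1 (hn : 0 < n) :
    ∑ j ∈ range n, ∑ l ∈ range n, ∑ k ∈ range n, ∑ m ∈ range n,
      (if m = j ∧ (k = j ∧ l = j) then (1:ℝ) else 0) = (n:ℝ) := by
  have s2 : ∀ j, j < n → ∀ l,
      (∑ k ∈ range n, ∑ m ∈ range n, (if m = j ∧ (k = j ∧ l = j) then (1:ℝ) else 0))
      = if l = j then 1 else 0 := by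
    intro j hj l
    rw [Finset.sum_congr rfl fun k _ => lwSumCollapse j hj _ 1]
    exact lwSumCollapse j hj _ 1
  have s3 : ∀ j, j < n →
      (∑ l ∈ range n, ∑ k ∈ range n, ∑ m ∈ range n,
        (if m = j ∧ (k = j ∧ l = j) then (1:ℝ) else 0)) = 1 := by
    intro j hj
    rw [Finset.sum_congr rfl fun l _ => s2 j hj l]
    exact lwSumCollapse₀ j hj 1
  rw [Finset.sum_congr rfl fun j hj => s3 j (mem_range.mp hj)]
  simp

lemma lw_evalB2 (hn : 0 < n) :
    ∑ j ∈ range n, ∑ l ∈ range n, ∑ k ∈ range n, ∑ m ∈ range n,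
      (if m = n-1-k ∧ (2*k+1 ≠ n ∧ (l = j ∧ 2*j+1 = n)) then (1:ℝ) else 0)
    = (if n % 2 = 1 then (n:ℝ) - 1 else 0) := by
  have s2 : ∀ j l,
      (∑ k ∈ range n, ∑ m ∈ range n,
        (if m = n-1-k ∧ (2*k+1 ≠ n ∧ (l = j ∧ 2*j+1 = n)) then (1:ℝ) else 0))
      = if l = j ∧ 2*j+1 = n then ((n:ℝ) - (if n % 2 = 1 then 1 else 0)) * 1 else 0 := by
    intro j l
    rw [Finset.sum_congr rfl fun k _ => lwSumCollapse (n-1-k) (by omega) _ 1]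
    exact lwSumNotmid _ 1
  have s3 : ∀ j, j < n →
      (∑ l ∈ range n, ∑ k ∈ range n, ∑ m ∈ range n,
        (if m = n-1-k ∧ (2*k+1 ≠ n ∧ (l = j ∧ 2*j+1 = n)) then (1:ℝ) else 0))
      = if 2*j+1 = n then ((n:ℝ) - (if n % 2 = 1 then 1 else 0)) * 1 else 0 := by
    intro j hj
    rw [Finset.sum_congr rfl fun l _ => s2 j l]
    exact lwSumCollapse j hj _ _
  rw [Finset.sum_congr rfl fun j hj => s3 j (mem_range.mp hj)]
  rw [lwSumMid₀]
  split_ifs with h1 <;> simp [h1]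

lemma lw_evalB3 (hn : 0 < n) :
    ∑ j ∈ range n, ∑ l ∈ range n, ∑ k ∈ range n, ∑ m ∈ range n,
      (if m = k ∧ (2*k+1 = n ∧ (l = n-1-j ∧ 2*j+1 ≠ n)) then (1:ℝ) else 0)
    = (if n % 2 = 1 then (n:ℝ) - 1 else 0) := by
  have s2 : ∀ j l,
      (∑ k ∈ range n, ∑ m ∈ range n,
        (if m = k ∧ (2*k+1 = n ∧ (l = n-1-j ∧ 2*j+1 ≠ n)) then (1:ℝ) else 0))
      = if n % 2 = 1 ∧ (l = n-1-j ∧ 2*j+1 ≠ n) then 1 else 0 := by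
    intro j l
    rw [Finset.sum_congr rfl fun k hk => lwSumCollapse k (mem_range.mp hk) _ 1]
    exact lwSumMid _ 1
  have s3 : ∀ j, j < n →
      (∑ l ∈ range n, ∑ k ∈ range n, ∑ m ∈ range n,
        (if m = k ∧ (2*k+1 = n ∧ (l = n-1-j ∧ 2*j+1 ≠ n)) then (1:ℝ) else 0))
      = if n % 2 = 1 ∧ 2*j+1 ≠ n then 1 else 0 := by
    intro j hj
    rw [Finset.sum_congr rfl fun l _ => s2 j l]
    rw [Finset.sum_congr rfl fun l _ => lw_ite_cong
      (by tauto : (n % 2 = 1 ∧ (l = n-1-j ∧ 2*j+1 ≠ n))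
        ↔ (l = n-1-j ∧ (n % 2 = 1 ∧ 2*j+1 ≠ n))) 1]
    exact lwSumCollapse (n-1-j) (by omega) _ 1
  rw [Finset.sum_congr rfl fun j hj => s3 j (mem_range.mp hj)]
  rw [Finset.sum_congr rfl fun j _ => lw_ite_cong
    (by tauto : (n % 2 = 1 ∧ 2*j+1 ≠ n) ↔ (2*j+1 ≠ n ∧ n % 2 = 1)) 1]
  rw [lwSumNotmid _ 1]
  split_ifs <;> ring

lemma lw_evalB4 (hn : 0 < n) :
    ∑ j ∈ range n, ∑ l ∈ range n, ∑ k ∈ range n, ∑ m ∈ range n,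
      (if m = n-1-k ∧ (2*k+1 ≠ n ∧ (l = n-1-j ∧ 2*j+1 ≠ n)) then (1:ℝ) else 0)
    = ((n:ℝ) - (if n % 2 = 1 then 1 else 0)) * ((n:ℝ) - (if n % 2 = 1 then 1 else 0)) := by
  have s2 : ∀ j l,
      (∑ k ∈ range n, ∑ m ∈ range n,
        (if m = n-1-k ∧ (2*k+1 ≠ n ∧ (l = n-1-j ∧ 2*j+1 ≠ n)) then (1:ℝ) else 0))
      = if l = n-1-j ∧ 2*j+1 ≠ n then ((n:ℝ) - (if n % 2 = 1 then 1 else 0)) * 1 else 0 := by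
    intro j l
    rw [Finset.sum_congr rfl fun k _ => lwSumCollapse (n-1-k) (by omega) _ 1]
    exact lwSumNotmid _ 1
  have s3 : ∀ j, j < n →
      (∑ l ∈ range n, ∑ k ∈ range n, ∑ m ∈ range n,
        (if m = n-1-k ∧ (2*k+1 ≠ n ∧ (l = n-1-j ∧ 2*j+1 ≠ n)) then (1:ℝ) else 0))
      = if 2*j+1 ≠ n then ((n:ℝ) - (if n % 2 = 1 then 1 else 0)) * 1 else 0 := by
    intro j hj
    rw [Finset.sum_congr rfl fun l _ => s2 j l]
    exact lwSumCollapse (n-1-j) (by omega) _ _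
  rw [Finset.sum_congr rfl fun j hj => s3 j (mem_range.mp hj)]
  rw [lwSumNotmid₀]
  ring

lemma lw_evalC1 (hn : 0 < n) :
    ∑ j ∈ range n, ∑ l ∈ range n, ∑ k ∈ range n, ∑ m ∈ range n,
      (if m = j ∧ k = l then (1:ℝ) else 0) = (n:ℝ) * n := by
  have s2 : ∀ j, j < n → ∀ l, l < n →
      (∑ k ∈ range n, ∑ m ∈ range n, (if m = j ∧ k = l then (1:ℝ) else 0)) = 1 := by
    intro j hj l hl
    rw [Finset.sum_congr rfl fun k _ => lwSumCollapse j hj (k = l) 1]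
    exact lwSumCollapse₀ l hl 1
  rw [Finset.sum_congr rfl fun j hj => Finset.sum_congr rfl fun l hl =>
    s2 j (mem_range.mp hj) l (mem_range.mp hl)]
  simp [Finset.sum_const, Finset.card_range]

lemma lw_evalC2 (hn : 0 < n) :
    ∑ j ∈ range n, ∑ l ∈ range n, ∑ k ∈ range n, ∑ m ∈ range n,
      (if m = n-1-j ∧ (k = j ∧ (l = n-1-j ∧ 2*j+1 ≠ n)) then (1:ℝ) else 0)
    = (n:ℝ) - (if n % 2 = 1 then 1 else 0) := by
  have s2 : ∀ j, j < n → ∀ l,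
      (∑ k ∈ range n, ∑ m ∈ range n,
        (if m = n-1-j ∧ (k = j ∧ (l = n-1-j ∧ 2*j+1 ≠ n)) then (1:ℝ) else 0))
      = if l = n-1-j ∧ 2*j+1 ≠ n then 1 else 0 := by
    intro j hj l
    rw [Finset.sum_congr rfl fun k _ => lwSumCollapse (n-1-j) (by omega) _ 1]
    exact lwSumCollapse j hj _ 1
  have s3 : ∀ j, j < n →
      (∑ l ∈ range n, ∑ k ∈ range n, ∑ m ∈ range n,
        (if m = n-1-j ∧ (k = j ∧ (l = n-1-j ∧ 2*j+1 ≠ n)) then (1:ℝ) else 0))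
      = if 2*j+1 ≠ n then 1 else 0 := by
    intro j hj
    rw [Finset.sum_congr rfl fun l _ => s2 j hj l]
    exact lwSumCollapse (n-1-j) (by omega) _ 1
  rw [Finset.sum_congr rfl fun j hj => s3 j (mem_range.mp hj)]
  rw [lwSumNotmid₀]; ring

lemma lw_evalD2 (hn : 0 < n) :
    ∑ j ∈ range n, ∑ l ∈ range n, ∑ k ∈ range n, ∑ m ∈ range n,
      (if m = n-1-k ∧ (k = j ∧ (l = n-1-j ∧ 2*j+1 ≠ n)) then (1:ℝ) else 0)
    = (n:ℝ) - (if n % 2 = 1 then 1 else 0) := by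
  have s2 : ∀ j, j < n → ∀ l,
      (∑ k ∈ range n, ∑ m ∈ range n,
        (if m = n-1-k ∧ (k = j ∧ (l = n-1-j ∧ 2*j+1 ≠ n)) then (1:ℝ) else 0))
      = if l = n-1-j ∧ 2*j+1 ≠ n then 1 else 0 := by
    intro j hj l
    rw [Finset.sum_congr rfl fun k _ => lwSumCollapse (n-1-k) (by omega) _ 1]
    exact lwSumCollapse j hj _ 1
  have s3 : ∀ j, j < n →
      (∑ l ∈ range n, ∑ k ∈ range n, ∑ m ∈ range n,
        (if m = n-1-k ∧ (k = j ∧ (l = n-1-j ∧ 2*j+1 ≠ n)) then (1:ℝ) else 0))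
      = if 2*j+1 ≠ n then 1 else 0 := by
    intro j hj
    rw [Finset.sum_congr rfl fun l _ => s2 j hj l]
    exact lwSumCollapse (n-1-j) (by omega) _ 1
  rw [Finset.sum_congr rfl fun j hj => s3 j (mem_range.mp hj)]
  rw [lwSumNotmid₀]; ring

end EvalLemmas

/-- For `f` drawn uniformly at random from the reciprocal Littlewood polynomials of
length `n`, `E(‖f‖₄⁴) = 3n² - 3n + (1-(-1)ⁿ)/2`. -/
theorem stmt_16 (n : ℕ) (hn : 0 < n) :
    (1 / 2 ^ ((n + 1) / 2) : ℝ) *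
        ∑ f : Fin ((n + 1) / 2) → Bool, L4pow4 n (symCoef n f) =
      3 * (n : ℝ) ^ 2 - 3 * n + (1 - (-1 : ℝ) ^ n) / 2 := by
  classical
  rw [Finset.sum_congr rfl fun f _ => lw_L4_eq n (symCoef n f)]
  have sw : (∑ f : Fin ((n + 1) / 2) → Bool, ∑ j ∈ Finset.range n, ∑ l ∈ Finset.range n,
      ∑ k ∈ Finset.range n, ∑ m ∈ Finset.range n,
      (if j + l = k + m then
        symCoef n f j * symCoef n f k * symCoef n f l * symCoef n f m else 0))
    = ∑ j ∈ Finset.range n, ∑ l ∈ Finset.range n, ∑ k ∈ Finset.range n, ∑ m ∈ Finset.range n,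
      ∑ f : Fin ((n + 1) / 2) → Bool,
      (if j + l = k + m then
        symCoef n f j * symCoef n f k * symCoef n f l * symCoef n f m else 0) := by
    rw [Finset.sum_comm]
    refine Finset.sum_congr rfl fun j _ => ?_
    rw [Finset.sum_comm]
    refine Finset.sum_congr rfl fun l _ => ?_
    rw [Finset.sum_comm]
    refine Finset.sum_congr rfl fun k _ => ?_
    exact Finset.sum_comm
  rw [sw]
  simp only [Finset.mul_sum]
  have key : ∀ j k l m : ℕ, j < n → k < n → l < n → m < n →
      (∑ f : Fin ((n + 1) / 2) → Bool, (1 / 2 ^ ((n + 1) / 2) : ℝ) *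
        (if j + l = k + m then
          symCoef n f j * symCoef n f k * symCoef n f l * symCoef n f m else 0))
      = ((if m = l ∧ k = j then (1:ℝ) else 0)
          + (if m = n-1-k ∧ (k = l ∧ (j = n-1-l ∧ 2*l+1 ≠ n)) then (1:ℝ) else 0))
        + ((if m = j ∧ (k = j ∧ l = j) then (1:ℝ) else 0)
          + (if m = n-1-k ∧ (2*k+1 ≠ n ∧ (l = j ∧ 2*j+1 = n)) then (1:ℝ) else 0)
          + (if m = k ∧ (2*k+1 = n ∧ (l = n-1-j ∧ 2*j+1 ≠ n)) then (1:ℝ) else 0)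
          + (if m = n-1-k ∧ (2*k+1 ≠ n ∧ (l = n-1-j ∧ 2*j+1 ≠ n)) then (1:ℝ) else 0))
        + ((if m = j ∧ k = l then (1:ℝ) else 0)
          + (if m = n-1-j ∧ (k = j ∧ (l = n-1-j ∧ 2*j+1 ≠ n)) then (1:ℝ) else 0))
        - 2 * ((if m = j ∧ (k = j ∧ l = j) then (1:ℝ) else 0)
          + (if m = n-1-k ∧ (k = j ∧ (l = n-1-j ∧ 2*j+1 ≠ n)) then (1:ℝ) else 0)
          + (if m = n-1-k ∧ (k = l ∧ (j = n-1-l ∧ 2*l+1 ≠ n)) then (1:ℝ) else 0)) := by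
    intro j k l m hj hk hl hm
    rw [← Finset.mul_sum]
    have h1 : (∑ f : Fin ((n + 1) / 2) → Bool,
        (if j + l = k + m then
          symCoef n f j * symCoef n f k * symCoef n f l * symCoef n f m else 0))
        = if j + l = k + m then
            (∑ f : Fin ((n + 1) / 2) → Bool,
              symCoef n f j * symCoef n f k * symCoef n f l * symCoef n f m) else 0 := by
      by_cases hC : j + l = k + m
      · simp [hC]
      · simp [hC]
    rw [h1, mul_ite, mul_zero, lw_exp_eq n hn j k l m hj hk hl hm]
    exact lw_g_all hn hj hk hl hm
  rw [Finset.sum_congr rfl fun j hj => Finset.sum_congr rfl fun l hl =>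
    Finset.sum_congr rfl fun k hk => Finset.sum_congr rfl fun m hm =>
      key j k l m (Finset.mem_range.mp hj) (Finset.mem_range.mp hk)
        (Finset.mem_range.mp hl) (Finset.mem_range.mp hm)]
  simp only [Finset.sum_add_distrib, Finset.sum_sub_distrib, ← Finset.mul_sum]
  rw [lw_evalA1 hn, lw_evalA2 hn, lw_evalB1 hn, lw_evalB2 hn, lw_evalB3 hn, lw_evalB4 hn,
    lw_evalC1 hn, lw_evalC2 hn, lw_evalD2 hn]
  by_cases hpar : n % 2 = 1
  · have hodd : Odd n := Nat.odd_iff.mpr hpar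
    simp only [if_pos hpar, hodd.neg_one_pow]
    ring
  · have heven : Even n := Nat.even_iff.mpr (by omega)
    simp only [if_neg hpar, heven.neg_one_pow]
    ring
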